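/- If ∏_{i=0}^{m−1} inf_{x∈X} ‖(Df_i(x))^{−1}‖^{−1} > m^{−m} (i.e. Hata's condition (7.6) holds, where ‖(Df_i(x))^{−1}‖^{−1} := 0 when Df_i(x) is not invertible), then β < 1. -/

import Mathlib

open MeasureTheory Filter Set Topology
open scoped ENNReal

noncomputable section

/-- The first digit `A₁(t) = ⌊m t⌋` of the `m`-adic expansion of `t ∈ [0,1)`. -/
def A1 (m : ℕ) (t : ℝ) : ℕ := (⌊(m : ℝ) * t⌋).toNat

/-- The shift map `Ht = m t - ⌊m t⌋` on `[0,1)`. -/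
def Hmap (m : ℕ) (t : ℝ) : ℝ := (m : ℝ) * t - ⌊(m : ℝ) * t⌋

/-- The `n`-th `m`-adic approximation `t_n = ⌊mⁿ t⌋ / mⁿ` of `t`. -/
def tApprox (m n : ℕ) (t : ℝ) : ℝ := (⌊(m : ℝ) ^ n * t⌋ : ℝ) / (m : ℝ) ^ n

/-- `M_n(t) = ‖G(t_n + m^{-n}) - G(t_n)‖`. -/
def Mseq {E : Type*} [NormedAddCommGroup E] (m : ℕ) (G : ℝ → E) (n : ℕ) (t : ℝ) : ℝ :=
  ‖G (tApprox m n t + ((m : ℝ) ^ n)⁻¹) - G (tApprox m n t)‖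

/-- `-log_m x` as a value in `[0,∞]`, with the convention `-log_m 0 = +∞`. -/
def negLogbE (m : ℕ) (x : ℝ) : ℝ≥0∞ :=
  if x = 0 then ⊤ else ENNReal.ofReal (-Real.logb m x)

/-- `log_m ‖T⁻¹‖` as a value in `[0,∞]`, with the convention that it is `+∞`
when `T` is not invertible (as a continuous linear map). -/
def betaIntegrand {E : Type*} [NormedAddCommGroup E] [NormedSpace ℝ E]
    (m : ℕ) (T : E →L[ℝ] E) : ℝ≥0∞ :=
  ⨅ A : {A : E ≃L[ℝ] E // (A : E →L[ℝ] E) = T},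
    ENNReal.ofReal (Real.logb m ‖(A.1.symm : E →L[ℝ] E)‖)

/-- `‖T⁻¹‖⁻¹`, with the convention that it is `0` when `T` is not invertible. -/
def coNorm {E : Type*} [NormedAddCommGroup E] [NormedSpace ℝ E] (T : E →L[ℝ] E) : ℝ :=
  ⨆ A : {A : E ≃L[ℝ] E // (A : E →L[ℝ] E) = T}, ‖(A.1.symm : E →L[ℝ] E)‖⁻¹

/-- `α = ∫₀¹ -log_m ‖Df_{A₁(t)}(G(Ht))‖ dt`, with `-log_m 0 = +∞`. -/
def alphaDR {E : Type*} [NormedAddCommGroup E] [NormedSpace ℝ E]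
    (m : ℕ) (Df : ℕ → E → E →L[ℝ] E) (G : ℝ → E) : ℝ≥0∞ :=
  ∫⁻ t in Set.Ico (0 : ℝ) 1, negLogbE m ‖Df (A1 m t) (G (Hmap m t))‖

/-- `β = ∫₀¹ log_m ‖(Df_{A₁(t)}(G(Ht)))⁻¹‖ dt`, with `‖T⁻¹‖ = +∞` for non-invertible `T`. -/
def betaDR {E : Type*} [NormedAddCommGroup E] [NormedSpace ℝ E]
    (m : ℕ) (Df : ℕ → E → E →L[ℝ] E) (G : ℝ → E) : ℝ≥0∞ :=
  ∫⁻ t in Set.Ico (0 : ℝ) 1, betaIntegrand m (Df (A1 m t) (G (Hmap m t)))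

end

section Aux

variable {E : Type*} [NormedAddCommGroup E] [NormedSpace ℝ E]

instance invSubtype_subsingleton (T : E →L[ℝ] E) :
    Subsingleton {A : E ≃L[ℝ] E // (A : E →L[ℝ] E) = T} := by
  refine ⟨fun A B => Subtype.ext (ContinuousLinearEquiv.ext ?_)⟩
  have h : (A.1 : E →L[ℝ] E) = (B.1 : E →L[ℝ] E) := A.2.trans B.2.symm
  exact congrArg (fun (S : E →L[ℝ] E) => (S : E → E)) h

lemma coNorm_nonneg (T : E →L[ℝ] E) : 0 ≤ coNorm T :=
  Real.iSup_nonneg fun _ => inv_nonneg.2 (norm_nonneg _)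

lemma betaIntegrand_le_aux {m : ℕ} (hm : 1 < (m : ℝ)) {T : E →L[ℝ] E} {c : ℝ}
    (hc : 0 < c) (hle : c ≤ coNorm T) :
    betaIntegrand m T ≤ ENNReal.ofReal (-Real.logb m c) := by
  have hT : 0 < coNorm T := hc.trans_le hle
  have hne : Nonempty {A : E ≃L[ℝ] E // (A : E →L[ℝ] E) = T} := by
    by_contra h
    rw [not_nonempty_iff] at h
    have h0 : coNorm T = 0 := Real.iSup_of_isEmpty _
    rw [h0] at hT; exact lt_irrefl _ hT
  obtain ⟨A⟩ := hne
  have hcoEq : coNorm T = ‖(A.1.symm : E →L[ℝ] E)‖⁻¹ := by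
    refine le_antisymm (Real.iSup_le (fun B => ?_) (inv_nonneg.2 (norm_nonneg _))) ?_
    · rw [Subsingleton.elim B A]
    · refine le_ciSup (f := fun B : {A : E ≃L[ℝ] E // (A : E →L[ℝ] E) = T} =>
        ‖(B.1.symm : E →L[ℝ] E)‖⁻¹) ⟨‖(A.1.symm : E →L[ℝ] E)‖⁻¹, ?_⟩ A
      rintro x ⟨B, rfl⟩
      rw [Subsingleton.elim B A]
  have h1 : c ≤ ‖(A.1.symm : E →L[ℝ] E)‖⁻¹ := hcoEq ▸ hle
  have h2 : ‖(A.1.symm : E →L[ℝ] E)‖ ≤ c⁻¹ := by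
    rw [← inv_inv ‖(A.1.symm : E →L[ℝ] E)‖]
    exact inv_anti₀ hc h1
  have hA0 : 0 < ‖(A.1.symm : E →L[ℝ] E)‖ := by
    rcases (norm_nonneg (A.1.symm : E →L[ℝ] E)).lt_or_eq with h | h
    · exact h
    · exfalso; rw [← h, inv_zero] at h1; exact absurd (hc.trans_le h1) (lt_irrefl 0)
  calc betaIntegrand m T ≤ ENNReal.ofReal (Real.logb m ‖(A.1.symm : E →L[ℝ] E)‖) :=
        iInf_le _ A
    _ ≤ ENNReal.ofReal (Real.logb m c⁻¹) :=
        ENNReal.ofReal_le_ofReal (Real.logb_le_logb_of_le hm hA0 h2)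
    _ = ENNReal.ofReal (-Real.logb m c) := by rw [Real.logb_inv]

lemma coNorm_le_one [Nontrivial E] {T : E →L[ℝ] E} (hT : ‖T‖ ≤ 1) : coNorm T ≤ 1 := by
  refine Real.iSup_le (fun A => ?_) zero_le_one
  have h1 : (1 : ℝ) ≤ ‖(A.1.symm : E →L[ℝ] E)‖ * ‖T‖ := by
    calc (1 : ℝ) = ‖ContinuousLinearMap.id ℝ E‖ := (ContinuousLinearMap.norm_id).symm
      _ = ‖(A.1.symm : E →L[ℝ] E).comp (A.1 : E →L[ℝ] E)‖ := by
          rw [ContinuousLinearEquiv.coe_symm_comp_coe]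
      _ ≤ ‖(A.1.symm : E →L[ℝ] E)‖ * ‖(A.1 : E →L[ℝ] E)‖ :=
          ContinuousLinearMap.opNorm_comp_le _ _
      _ = ‖(A.1.symm : E →L[ℝ] E)‖ * ‖T‖ := by rw [A.2]
  have h2 : (1 : ℝ) ≤ ‖(A.1.symm : E →L[ℝ] E)‖ := by
    nlinarith [norm_nonneg (A.1.symm : E →L[ℝ] E), norm_nonneg T]
  exact inv_le_one_of_one_le₀ h2

lemma A1_eq_of_mem {m : ℕ} (hm : 0 < m) {i : ℕ} {t : ℝ}
    (ht : t ∈ Set.Ico ((i : ℝ) / m) (((i : ℝ) + 1) / m)) : A1 m t = i := by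
  have hm' : (0 : ℝ) < m := by exact_mod_cast hm
  have h1 : (i : ℝ) ≤ (m : ℝ) * t := by
    have := (div_le_iff₀ hm').mp ht.1
    nlinarith
  have h2 : (m : ℝ) * t < (i : ℝ) + 1 := by
    have := (lt_div_iff₀ hm').mp ht.2
    nlinarith
  have hfl : ⌊(m : ℝ) * t⌋ = (i : ℤ) := by
    rw [Int.floor_eq_iff]
    refine ⟨by exact_mod_cast h1, by push_cast; exact h2⟩
  simp [A1, hfl]

lemma Hmap_mem_Icc {m : ℕ} (t : ℝ) : Hmap m t ∈ Set.Icc (0 : ℝ) 1 := by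
  have h : Hmap m t = Int.fract ((m : ℝ) * t) := rfl
  rw [h]
  exact ⟨Int.fract_nonneg _, (Int.fract_lt_one _).le⟩

end Aux

/-- If `∏_{i<m} inf_{x ∈ X} ‖(Df_i(x))⁻¹‖⁻¹ > m^{-m}` (Hata's condition (7.6)), where
`‖(Df_i(x))⁻¹‖⁻¹ := 0` when `Df_i(x)` is not invertible, then `β < 1`. -/
theorem deRham_beta_lt_one_of_prod_inf_gt
    {E : Type*} [NormedAddCommGroup E] [NormedSpace ℝ E] [CompleteSpace E]
    [TopologicalSpace.SeparableSpace E]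
    (X : Set E) (hXcl : IsClosed X) (hXint : (interior X).Nonempty)
    (m : ℕ) (hm : 2 ≤ m)
    (f : ℕ → E → E) (Df : ℕ → E → E →L[ℝ] E) (Fix : ℕ → E)
    (hmaps : ∀ i < m, Set.MapsTo (f i) X X)
    (hweak : ∀ i < m, ∀ x ∈ X, ∀ y ∈ X, x ≠ y → ‖f i x - f i y‖ < ‖x - y‖)
    (hFixmem : ∀ i < m, Fix i ∈ X)
    (hFix : ∀ i < m, f i (Fix i) = Fix i)
    (hchain : ∀ i, i + 1 < m → f i (Fix (m - 1)) = f (i + 1) (Fix 0))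
    (hDf : ∀ i < m, ∀ x ∈ X, HasFDerivWithinAt (f i) (Df i x) X x)
    (hDfUC : ∀ i < m, UniformContinuousOn (Df i) X)
    (G : ℝ → E)
    (hGc : ContinuousOn G (Set.Icc 0 1))
    (hGX : Set.MapsTo G (Set.Icc 0 1) X)
    (hGeq : ∀ i < m, ∀ t : ℝ, (i : ℝ) / m ≤ t → t ≤ ((i : ℝ) + 1) / m →
      G t = f i (G ((m : ℝ) * t - i)))
    (hG0 : G 0 = Fix 0) (hG1 : G 1 = Fix (m - 1))
    (hprod : ((m : ℝ) ^ m)⁻¹ < ∏ i ∈ Finset.range m, ⨅ x : X, coNorm (Df i (x : E))) :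
    betaDR m Df G < 1 := by
  classical
  have hm0 : 0 < m := lt_of_lt_of_le (by norm_num) hm
  have hm' : (0 : ℝ) < m := by exact_mod_cast hm0
  have hm1 : (1 : ℝ) < m := by exact_mod_cast lt_of_lt_of_le one_lt_two hm
  rcases subsingleton_or_nontrivial E with hE | hE
  · -- trivial space: the integrand is 0
    have hzero : ∀ T : E →L[ℝ] E, betaIntegrand m T = 0 := by
      intro T
      have hA : ((ContinuousLinearEquiv.refl ℝ E : E ≃L[ℝ] E) : E →L[ℝ] E) = T :=
        Subsingleton.elim _ _
      refine le_antisymm ?_ (zero_le)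
      refine le_trans (iInf_le _ ⟨ContinuousLinearEquiv.refl ℝ E, hA⟩) ?_
      have h0 : ((ContinuousLinearEquiv.refl ℝ E).symm : E →L[ℝ] E) = 0 :=
        Subsingleton.elim _ _
      simp [h0]
    have : betaDR m Df G = 0 := by
      rw [betaDR]
      simp only [hzero]
      simp
    rw [this]; norm_num
  -- main case
  obtain ⟨x₀, hx₀⟩ := hXint
  have hXne : X.Nonempty := ⟨x₀, interior_subset hx₀⟩
  haveI : Nonempty X := hXne.to_subtype
  set c : ℕ → ℝ := fun i => ⨅ x : X, coNorm (Df i (x : E)) with hcdef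
  have hprod' : ((m : ℝ) ^ m)⁻¹ < ∏ i ∈ Finset.range m, c i := hprod
  have hbdd : ∀ i : ℕ, BddBelow (Set.range fun x : X => coNorm (Df i (x : E))) := by
    intro i
    exact ⟨0, by rintro _ ⟨x, rfl⟩; exact coNorm_nonneg _⟩
  have hcle : ∀ (i : ℕ), ∀ x ∈ X, c i ≤ coNorm (Df i x) := by
    intro i x hx
    exact ciInf_le (hbdd i) ⟨x, hx⟩
  have hcnonneg : ∀ i, 0 ≤ c i := fun i => Real.iInf_nonneg fun _ => coNorm_nonneg _
  have hcpos : ∀ i ∈ Finset.range m, 0 < c i := by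
    intro i hi
    rcases (hcnonneg i).lt_or_eq with h | h
    · exact h
    · exfalso
      have h0 : ∏ j ∈ Finset.range m, c j = 0 := Finset.prod_eq_zero hi h.symm
      rw [h0] at hprod'
      exact absurd hprod' (not_lt.mpr (inv_nonneg.mpr (pow_nonneg hm'.le m)))
  have hcle1 : ∀ i < m, c i ≤ 1 := by
    intro i hi
    have hX𝓝 : X ∈ 𝓝 x₀ := mem_interior_iff_mem_nhds.mp hx₀
    have hder : HasFDerivAt (f i) (Df i x₀) x₀ :=
      (hDf i hi x₀ (interior_subset hx₀)).hasFDerivAt hX𝓝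
    have hlip : LipschitzOnWith 1 (f i) X := by
      refine LipschitzOnWith.of_dist_le_mul fun x hx y hy => ?_
      rcases eq_or_ne x y with rfl | hxy
      · simp
      · rw [NNReal.coe_one, one_mul, dist_eq_norm, dist_eq_norm]
        exact (hweak i hi x hx y hy hxy).le
    have hnorm : ‖Df i x₀‖ ≤ 1 := by
      simpa using hder.le_of_lipschitzOn hX𝓝 hlip
    exact le_trans (hcle i x₀ (interior_subset hx₀)) (coNorm_le_one hnorm)
  have key : ∀ i < m, ∀ x ∈ X,
      betaIntegrand m (Df i x) ≤ ENNReal.ofReal (-Real.logb m (c i)) := by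
    intro i hi x hx
    exact betaIntegrand_le_aux hm1 (hcpos i (Finset.mem_range.mpr hi)) (hcle i x hx)
  set s : ℕ → Set ℝ := fun i => Set.Ico ((i : ℝ) / m) (((i : ℝ) + 1) / m) with hsdef
  have hsub : Set.Ico (0 : ℝ) 1 ⊆ ⋃ i ∈ Finset.range m, s i := by
    intro t ht
    have h0 : 0 ≤ (m : ℝ) * t := mul_nonneg hm'.le ht.1
    have h1 : (m : ℝ) * t < m := by nlinarith [ht.2]
    have hfl0 : 0 ≤ ⌊(m : ℝ) * t⌋ := Int.floor_nonneg.mpr h0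
    have hk : ((A1 m t : ℕ) : ℝ) = ((⌊(m : ℝ) * t⌋ : ℤ) : ℝ) := by
      rw [A1]
      exact_mod_cast congrArg (fun z : ℤ => (z : ℝ)) (Int.toNat_of_nonneg hfl0)
    have hkle : ((A1 m t : ℕ) : ℝ) ≤ (m : ℝ) * t := by
      rw [hk]; exact Int.floor_le _
    have hklt : (m : ℝ) * t < ((A1 m t : ℕ) : ℝ) + 1 := by
      rw [hk]; exact Int.lt_floor_add_one _
    have hmem : A1 m t ∈ Finset.range m := by
      refine Finset.mem_range.mpr ?_
      have : ((A1 m t : ℕ) : ℝ) < m := lt_of_le_of_lt hkle h1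
      exact_mod_cast this
    refine Set.mem_biUnion hmem ?_
    constructor
    · rw [div_le_iff₀ hm']; linarith
    · rw [lt_div_iff₀ hm']; linarith
  have hdisj : (↑(Finset.range m) : Set ℕ).PairwiseDisjoint s := by
    intro i _ j _ hij
    exact Set.disjoint_left.mpr fun t hti htj =>
      hij ((A1_eq_of_mem hm0 hti).symm.trans (A1_eq_of_mem hm0 htj))
  have hvol : ∀ i : ℕ, volume (s i) = ENNReal.ofReal (1 / m) := by
    intro i
    rw [hsdef]
    simp only [Real.volume_Ico]
    congr 1
    field_simp
    ring
  have hnonneg : ∀ i ∈ Finset.range m, 0 ≤ -Real.logb m (c i) := by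
    intro i hi
    have := Real.logb_nonpos hm1 (hcnonneg i) (hcle1 i (Finset.mem_range.mp hi))
    linarith
  calc betaDR m Df G
      = ∫⁻ t in Set.Ico (0 : ℝ) 1, betaIntegrand m (Df (A1 m t) (G (Hmap m t))) := rfl
    _ ≤ ∫⁻ t in ⋃ i ∈ Finset.range m, s i,
          betaIntegrand m (Df (A1 m t) (G (Hmap m t))) := lintegral_mono_set hsub
    _ = ∑ i ∈ Finset.range m, ∫⁻ t in s i,
          betaIntegrand m (Df (A1 m t) (G (Hmap m t))) :=
        lintegral_biUnion_finset hdisj (fun i _ => measurableSet_Ico) _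
    _ ≤ ∑ i ∈ Finset.range m, ENNReal.ofReal (-Real.logb m (c i)) * volume (s i) := by
        refine Finset.sum_le_sum fun i hi => ?_
        have hi' : i < m := Finset.mem_range.mp hi
        calc ∫⁻ t in s i, betaIntegrand m (Df (A1 m t) (G (Hmap m t)))
            ≤ ∫⁻ _ in s i, ENNReal.ofReal (-Real.logb m (c i)) := by
              refine setLIntegral_mono measurable_const fun t ht => ?_
              rw [A1_eq_of_mem hm0 ht]
              exact key i hi' (G (Hmap m t)) (hGX (Hmap_mem_Icc t))
          _ = ENNReal.ofReal (-Real.logb m (c i)) * volume (s i) :=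
              setLIntegral_const _ _
    _ = (∑ i ∈ Finset.range m, ENNReal.ofReal (-Real.logb m (c i))) *
          ENNReal.ofReal (1 / m) := by
        simp only [hvol]
        rw [Finset.sum_mul]
    _ = ENNReal.ofReal ((∑ i ∈ Finset.range m, -Real.logb m (c i)) * (1 / m)) := by
        rw [← ENNReal.ofReal_sum_of_nonneg hnonneg,
          ENNReal.ofReal_mul (Finset.sum_nonneg hnonneg)]
    _ < 1 := by
        rw [ENNReal.ofReal_lt_one]
        have hsumeq : ∑ i ∈ Finset.range m, -Real.logb m (c i)
            = -Real.logb m (∏ i ∈ Finset.range m, c i) := by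
          rw [Real.logb_prod _ _ (fun i hi => (hcpos i hi).ne'), ← Finset.sum_neg_distrib]
        have hPpos : (0 : ℝ) < ((m : ℝ) ^ m)⁻¹ := by positivity
        have hlt : Real.logb m (((m : ℝ) ^ m)⁻¹)
            < Real.logb m (∏ i ∈ Finset.range m, c i) :=
          Real.logb_lt_logb hm1 hPpos hprod'
        have hval : Real.logb m (((m : ℝ) ^ m)⁻¹) = -(m : ℝ) := by
          rw [Real.logb_inv, Real.logb_pow, Real.logb_self_eq_one hm1]
          · ring
        rw [hval] at hlt
        rw [hsumeq]
        have : -Real.logb m (∏ i ∈ Finset.range m, c i) < (m : ℝ) := by linarith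
        calc -Real.logb m (∏ i ∈ Finset.range m, c i) * (1 / m)
            < (m : ℝ) * (1 / m) := by
              apply mul_lt_mul_of_pos_right this
              positivity
          _ = 1 := by field_simp
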